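/- Consider the output X_k = C·Y_k with Y_k = Q_p J^k Z + Q_p ∑_{i=0}^{k-1} J^{k-i-1} P₁ B U_i − Q_q ∑_{i=0}^{q*-1} H^i P₂ B U_{k+i}. If C·Q_q·H^i·P₂·B = 0 for all i = 1, …, q*−1, then X_k = C Q_p J^k Z + C Q_p ∑_{i=0}^{k-1} J^{k-i-1} P₁ B U_i − C Q_q P₂ B U_k; in particular X_k depends only on Z and U_0, …, U_k. -/

import Mathlib

lemma mulVec_sum' {α n m ι : Type*} [NonUnitalNonAssocSemiring α] [Fintype m]
    (A : Matrix n m α) (s : Finset ι) (f : ι → m → α) :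
    A.mulVec (∑ i ∈ s, f i) = ∑ i ∈ s, A.mulVec (f i) := by
  classical
  induction s using Finset.induction with
  | empty => simp
  | insert _ _ h ih => simp [Finset.sum_insert h, Matrix.mulVec_add, ih]

theorem stmt10 {n m p q r r1 qs : ℕ}
    (C : Matrix (Fin n) (Fin m) ℝ)
    (Qp : Matrix (Fin m) (Fin p) ℝ) (Qq : Matrix (Fin m) (Fin q) ℝ)
    (J : Matrix (Fin p) (Fin p) ℝ)
    (H : Matrix (Fin q) (Fin q) ℝ) (hnil : H ^ qs = 0)
    (P₁ : Matrix (Fin p) (Fin r) ℝ) (P₂ : Matrix (Fin q) (Fin r) ℝ)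
    (B : Matrix (Fin r) (Fin r1) ℝ)
    (Z : Fin p → ℝ) (U : ℕ → Fin r1 → ℝ)
    (Y : ℕ → Fin m → ℝ)
    (hY : ∀ k, Y k = Qp.mulVec ((J ^ k).mulVec Z)
        + Qp.mulVec (∑ i ∈ Finset.range k, (J ^ (k - i - 1)).mulVec ((P₁ * B).mulVec (U i)))
        - Qq.mulVec (∑ i ∈ Finset.range qs, (H ^ i).mulVec ((P₂ * B).mulVec (U (k + i)))))
    (X : ℕ → Fin n → ℝ) (hX : ∀ k, X k = C.mulVec (Y k))
    (hcaus : ∀ i : ℕ, 1 ≤ i → i ≤ qs - 1 → C * (Qq * (H ^ i * P₂ * B)) = 0) :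
    ∀ k, X k = (C * Qp).mulVec ((J ^ k).mulVec Z)
        + (C * Qp).mulVec (∑ i ∈ Finset.range k, (J ^ (k - i - 1)).mulVec ((P₁ * B).mulVec (U i)))
        - (C * Qq).mulVec ((P₂ * B).mulVec (U k)) := by
  intro k
  have key : C.mulVec (Qq.mulVec (∑ i ∈ Finset.range qs,
      (H ^ i).mulVec ((P₂ * B).mulVec (U (k + i)))))
      = (C * Qq).mulVec ((P₂ * B).mulVec (U k)) := by
    rcases Nat.eq_zero_or_pos qs with h0 | hpos
    · subst h0
      have h1 : (1 : Matrix (Fin q) (Fin q) ℝ) = 0 := by simpa using hnil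
      have hPB : P₂ * B = 0 := by
        rw [← Matrix.one_mul (P₂ * B), h1, Matrix.zero_mul]
      simp [hPB]
    · rw [mulVec_sum', mulVec_sum']
      have hcong : ∀ i ∈ Finset.range qs,
          C.mulVec (Qq.mulVec ((H ^ i).mulVec ((P₂ * B).mulVec (U (k + i)))))
          = if i = 0 then (C * Qq).mulVec ((P₂ * B).mulVec (U k)) else 0 := by
        intro i hi
        rcases Nat.eq_zero_or_pos i with rfl | hip
        · simp [Matrix.mulVec_mulVec, Matrix.mul_assoc]
        · rw [if_neg hip.ne']
          have hz := hcaus i hip (Nat.le_sub_one_of_lt (Finset.mem_range.mp hi))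
          have heq : C.mulVec (Qq.mulVec ((H ^ i).mulVec ((P₂ * B).mulVec (U (k + i)))))
              = (C * (Qq * (H ^ i * P₂ * B))).mulVec (U (k + i)) := by
            simp [Matrix.mulVec_mulVec, Matrix.mul_assoc]
          rw [heq, hz, Matrix.zero_mulVec]
      rw [Finset.sum_congr rfl hcong, Finset.sum_ite_eq' (Finset.range qs) 0]
      simp [Finset.mem_range.mpr hpos]
  rw [hX, hY, Matrix.mulVec_sub, Matrix.mulVec_add, key]
  simp [Matrix.mulVec_mulVec, Matrix.mul_assoc]
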